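/- arXiv:1210.3398 — 3 statements merged into one kernel-verified Lean document; each statement's English description precedes it below -/
import Mathlib

section
/- Let γ be a translation invariant generalized limit on L∞(0,∞) and let x ∈ L∞(0,∞) be uniformly continuous. Then γ(x) ≤ lim_{t→∞} sup_{h≥0} (1/t)∫₀^t x(s+h) ds. -/
open Real Filter MeasureTheory

noncomputable section

/-- A function on `(0,∞)` (modelled on all of `ℝ`) is (essentially) bounded. -/
def Bdd (f : ℝ → ℝ) : Prop := ∃ C, ∀ t, |f t| ≤ C

/-- A generalized limit: a positive, normalized linear functional on `L∞(0,∞)`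
(modelled as bounded functions `ℝ → ℝ`) which extends the limit at infinity. -/
structure GenLimit where
  ω : (ℝ → ℝ) → ℝ
  add : ∀ f g, Bdd f → Bdd g → ω (f + g) = ω f + ω g
  smul : ∀ (c : ℝ) f, Bdd f → ω (c • f) = c * ω f
  pos : ∀ f, Bdd f → (∀ t, 0 ≤ f t) → 0 ≤ ω f
  lim : ∀ f (c : ℝ), Bdd f → Tendsto f atTop (nhds c) → ω f = c

/-- Exponentiation invariance: `ω(x ∘ (t ↦ t^a)) = ω(x)` for all `a > 0`. -/
def GenLimit.ExpInvariant (γ : GenLimit) : Prop :=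
  ∀ f, Bdd f → ∀ a > (0:ℝ), γ.ω (fun t => f (t ^ a)) = γ.ω f

/-- Dilation invariance: `ω(x ∘ (t ↦ βt)) = ω(x)` for all `β > 0`. -/
def GenLimit.DilInvariant (γ : GenLimit) : Prop :=
  ∀ f, Bdd f → ∀ β > (0:ℝ), γ.ω (fun t => f (β * t)) = γ.ω f

/-- Translation invariance: `ω(x(·+l)) = ω(x)` for all `l > 0`. -/
def GenLimit.TransInvariant (γ : GenLimit) : Prop :=
  ∀ f, Bdd f → ∀ l > (0:ℝ), γ.ω (fun t => f (t + l)) = γ.ω f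

lemma bdd_const (c : ℝ) : Bdd (fun _ => c) := ⟨|c|, fun _ => le_rfl⟩

lemma Bdd.comp' {f : ℝ → ℝ} (hf : Bdd f) (φ : ℝ → ℝ) : Bdd (fun t => f (φ t)) := by
  obtain ⟨C, hC⟩ := hf; exact ⟨C, fun t => hC (φ t)⟩

lemma Bdd.add' {f g : ℝ → ℝ} (hf : Bdd f) (hg : Bdd g) : Bdd (f + g) := by
  obtain ⟨C, hC⟩ := hf; obtain ⟨D, hD⟩ := hg
  exact ⟨C + D, fun t => (abs_add_le _ _).trans (add_le_add (hC t) (hD t))⟩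

lemma Bdd.sub' {f g : ℝ → ℝ} (hf : Bdd f) (hg : Bdd g) : Bdd (f - g) := by
  obtain ⟨C, hC⟩ := hf; obtain ⟨D, hD⟩ := hg
  exact ⟨C + D, fun t => (abs_sub _ _).trans (add_le_add (hC t) (hD t))⟩

lemma Bdd.const_mul {f : ℝ → ℝ} (hf : Bdd f) (c : ℝ) : Bdd (fun t => c * f t) := by
  obtain ⟨C, hC⟩ := hf
  exact ⟨|c| * C, fun t => by
    rw [abs_mul]
    exact mul_le_mul_of_nonneg_left (hC t) (abs_nonneg c)⟩

lemma bdd_shift_sum {x : ℝ → ℝ} (hx : Bdd x) (c : ℕ → ℝ) (n : ℕ) :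
    Bdd (fun h => ∑ k ∈ Finset.range n, x (h + c k)) := by
  obtain ⟨C, hC⟩ := hx
  refine ⟨n * C, fun t => ?_⟩
  calc |∑ k ∈ Finset.range n, x (t + c k)| ≤ ∑ k ∈ Finset.range n, |x (t + c k)| :=
        Finset.abs_sum_le_sum_abs _ _
    _ ≤ ∑ _k ∈ Finset.range n, C := Finset.sum_le_sum fun k _ => hC _
    _ = n * C := by simp [Finset.sum_const, nsmul_eq_mul]

lemma GenLimit.omega_const (γ : GenLimit) (c : ℝ) : γ.ω (fun _ => c) = c :=
  γ.lim _ c (bdd_const c) tendsto_const_nhds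

/-- If `f t ≤ C` for all `t ≥ 0`, then `γ.ω f ≤ C`. -/
lemma GenLimit.omega_le (γ : GenLimit) {f : ℝ → ℝ} (hf : Bdd f) {C : ℝ}
    (h : ∀ t, 0 ≤ t → f t ≤ C) : γ.ω f ≤ C := by
  set f' : ℝ → ℝ := fun t => f (max t 0) with hf'def
  have hf' : Bdd f' := hf.comp' _
  have hfd : Bdd (f - f') := hf.sub' hf'
  have hzero : γ.ω (f - f') = 0 := by
    refine γ.lim _ 0 hfd ?_
    have : ∀ᶠ t in atTop, (f - f') t = (0:ℝ) := by
      filter_upwards [eventually_ge_atTop (0:ℝ)] with t ht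
      simp [f', max_eq_left ht]
    exact Tendsto.congr' (this.mono fun t ht => ht.symm) tendsto_const_nhds
  have hsum : γ.ω (f' + (f - f')) = γ.ω f' + γ.ω (f - f') := γ.add _ _ hf' hfd
  have hfeq : f' + (f - f') = f := by funext t; simp
  have hωf : γ.ω f = γ.ω f' := by rw [← hfeq, hsum, hzero, add_zero]
  -- positivity on C - f'
  have hneg : Bdd ((-1 : ℝ) • f') := by
    have := hf'.const_mul (-1)
    convert this using 1; funext t; simp [smul_eq_mul]
  have hpos : 0 ≤ γ.ω ((fun _ => C) + ((-1 : ℝ) • f')) := by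
    refine γ.pos _ ((bdd_const C).add' hneg) fun t => ?_
    have := h (max t 0) (le_max_right _ _)
    simp only [Pi.add_apply, Pi.smul_apply, smul_eq_mul]
    linarith
  have hval : γ.ω ((fun _ => C) + ((-1 : ℝ) • f')) = C - γ.ω f' := by
    rw [γ.add _ _ (bdd_const C) hneg, γ.omega_const, γ.smul _ _ hf']
    ring
  rw [hωf]
  linarith [hval ▸ hpos]

lemma GenLimit.omega_shift (γ : GenLimit) (htr : γ.TransInvariant) {x : ℝ → ℝ}
    (hx : Bdd x) {c : ℝ} (hc : 0 ≤ c) : γ.ω (fun h => x (h + c)) = γ.ω x := by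
  rcases hc.lt_or_eq with h | h
  · exact htr x hx c h
  · have : (fun h => x (h + c)) = x := by funext t; rw [← h, add_zero]
    rw [this]

lemma GenLimit.omega_sum (γ : GenLimit) (htr : γ.TransInvariant) {x : ℝ → ℝ}
    (hx : Bdd x) {d : ℝ} (hd : 0 ≤ d) (n : ℕ) :
    γ.ω (fun h => ∑ k ∈ Finset.range n, x (h + k * d)) = n * γ.ω x := by
  induction n with
  | zero => simpa using γ.omega_const 0
  | succ n ih =>
    have hsplit : (fun h => ∑ k ∈ Finset.range (n + 1), x (h + k * d)) =
        (fun h => ∑ k ∈ Finset.range n, x (h + k * d)) + (fun h => x (h + n * d)) := by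
      funext h; simp [Finset.sum_range_succ]
    rw [hsplit, γ.add _ _ (bdd_shift_sum hx _ n) (hx.comp' _), ih,
      γ.omega_shift htr hx (by positivity)]
    push_cast; ring

/-- Sucheston-type upper bound for translation invariant generalized limits of
uniformly continuous functions. -/
theorem transInvariant_le_sucheston (γ : GenLimit) (htr : γ.TransInvariant)
    (x : ℝ → ℝ) (hx : Bdd x) (hu : UniformContinuous x) :
    γ.ω x ≤ Filter.limsup
      (fun t => ⨆ h : Set.Ici (0:ℝ), t⁻¹ * ∫ s in (0:ℝ)..t, x (s + ↑h)) atTop := by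
  haveI : Nonempty (Set.Ici (0:ℝ)) := Set.nonempty_Ici.to_subtype
  obtain ⟨C, hC⟩ := hx
  have hxB : Bdd x := ⟨C, hC⟩
  set S : ℝ → ℝ := fun t => ⨆ h : Set.Ici (0:ℝ), t⁻¹ * ∫ s in (0:ℝ)..t, x (s + ↑h) with hSdef
  have hcont : Continuous x := hu.continuous
  have hint : ∀ (h a b : ℝ), IntervalIntegrable (fun s => x (s + h)) volume a b := by
    intro h a b
    exact (hcont.comp (continuous_id.add continuous_const)).intervalIntegrable a b
  have hIbound : ∀ t : ℝ, 0 < t → ∀ h : ℝ, t⁻¹ * (∫ s in (0:ℝ)..t, x (s + h)) ≤ C := by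
    intro t ht h
    have hnorm : ‖∫ s in (0:ℝ)..t, x (s + h)‖ ≤ C * |t - 0| :=
      intervalIntegral.norm_integral_le_of_norm_le_const fun s _ => by
        simpa using hC (s + h)
    have h1 : (∫ s in (0:ℝ)..t, x (s + h)) ≤ C * t := by
      rw [Real.norm_eq_abs] at hnorm
      calc (∫ s in (0:ℝ)..t, x (s + h)) ≤ |∫ s in (0:ℝ)..t, x (s + h)| := le_abs_self _
        _ ≤ C * |t - 0| := hnorm
        _ = C * t := by rw [sub_zero, abs_of_pos ht]
    calc t⁻¹ * (∫ s in (0:ℝ)..t, x (s + h)) ≤ t⁻¹ * (C * t) := by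
          exact mul_le_mul_of_nonneg_left h1 (inv_nonneg.mpr ht.le)
      _ = C := by field_simp
  have hBdd : ∀ t : ℝ, 0 < t →
      BddAbove (Set.range fun h : Set.Ici (0:ℝ) => t⁻¹ * ∫ s in (0:ℝ)..t, x (s + ↑h)) := by
    intro t ht
    exact ⟨C, by rintro _ ⟨h, rfl⟩; exact hIbound t ht h⟩
  have hSb : ∀ t : ℝ, 0 < t → S t ≤ C := by
    intro t ht
    exact ciSup_le fun h => hIbound t ht h
  -- key estimate
  have key : ∀ ε : ℝ, 0 < ε → ∀ t : ℝ, 0 < t → γ.ω x ≤ S t + ε := by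
    intro ε hε t ht
    obtain ⟨δ, hδ, hδx⟩ := Metric.uniformContinuous_iff.mp hu ε hε
    obtain ⟨n, hn⟩ := exists_nat_gt (t / δ)
    have htδ : 0 < t / δ := div_pos ht hδ
    have hn0 : 0 < (n : ℝ) := htδ.trans hn
    set d : ℝ := t / n with hddef
    have hd0 : 0 < d := div_pos ht hn0
    have hnd : (n : ℝ) * d = t := by rw [hddef]; field_simp [hn0.ne']
    have hdδ : d < δ := by
      rw [hddef, div_lt_iff₀ hn0]
      have := (div_lt_iff₀ hδ).mp hn
      linarith [this, mul_comm (n : ℝ) δ]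
    set F : ℝ → ℝ := fun h => ∑ k ∈ Finset.range n, x (h + k * d) with hFdef
    have hFB : Bdd F := bdd_shift_sum hxB _ n
    set g : ℝ → ℝ := fun h => (n : ℝ)⁻¹ * F h with hgdef
    have hgB : Bdd g := hFB.const_mul _
    have hωg : γ.ω g = γ.ω x := by
      have hgsm : g = (n : ℝ)⁻¹ • F := by funext h; simp [hgdef, smul_eq_mul]
      rw [hgsm, γ.smul _ _ hFB, γ.omega_sum htr hxB hd0.le n]
      field_simp
    have hpt : ∀ h : ℝ, 0 ≤ h → g h ≤ t⁻¹ * (∫ s in (0:ℝ)..t, x (s + h)) + ε := by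
      intro h hh
      set a : ℕ → ℝ := fun k => k * d with hadef
      have hstep : ∀ k : ℕ, a (k + 1) - a k = d := by
        intro k; simp only [hadef]; push_cast; ring
      have hsplit : ∑ k ∈ Finset.range n, ∫ s in a k..a (k + 1), x (s + h)
          = ∫ s in (a 0)..(a n), x (s + h) :=
        intervalIntegral.sum_integral_adjacent_intervals fun k _ => hint h _ _
      have ha0 : a 0 = 0 := by simp [hadef]
      have han : a n = t := by simp only [hadef]; exact hnd
      have hpiece : ∀ k : ℕ, (x (h + a k) - ε) * d ≤ ∫ s in a k..a (k + 1), x (s + h) := by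
        intro k
        have hle : a k ≤ a (k + 1) := by have := hstep k; linarith
        have hmono : ∀ s ∈ Set.Icc (a k) (a (k + 1)), x (h + a k) - ε ≤ x (s + h) := by
          intro s hs
          have hdist : dist (s + h) (h + a k) < δ := by
            rw [Real.dist_eq]
            have he : s + h - (h + a k) = s - a k := by ring
            rw [he, abs_of_nonneg (by linarith [hs.1])]
            have h2 : s - a k ≤ d := by have := hstep k; linarith [hs.2]
            linarith
          have := hδx hdist
          rw [Real.dist_eq, abs_sub_lt_iff] at this
          linarith [this.2]
        calc (x (h + a k) - ε) * d = ∫ _s in a k..a (k + 1), (x (h + a k) - ε) := by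
              rw [intervalIntegral.integral_const, hstep k, smul_eq_mul, mul_comm]
          _ ≤ ∫ s in a k..a (k + 1), x (s + h) :=
              intervalIntegral.integral_mono_on hle intervalIntegrable_const (hint h _ _) hmono
      have hsum : ∑ k ∈ Finset.range n, (x (h + a k) - ε) * d
          ≤ ∫ s in (0:ℝ)..t, x (s + h) := by
        calc ∑ k ∈ Finset.range n, (x (h + a k) - ε) * d
            ≤ ∑ k ∈ Finset.range n, ∫ s in a k..a (k + 1), x (s + h) :=
              Finset.sum_le_sum fun k _ => hpiece k
          _ = ∫ s in (0:ℝ)..t, x (s + h) := by rw [hsplit, ha0, han]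
      have hL : ∑ k ∈ Finset.range n, (x (h + a k) - ε) * d = t * g h - t * ε := by
        have h1 : ∑ k ∈ Finset.range n, (x (h + a k) - ε) * d
            = (∑ k ∈ Finset.range n, x (h + a k)) * d - n * ε * d := by
          rw [← Finset.sum_mul]
          rw [Finset.sum_sub_distrib, Finset.sum_const, Finset.card_range, nsmul_eq_mul]
          ring
        have h2 : t * g h = (∑ k ∈ Finset.range n, x (h + a k)) * d := by
          simp only [hgdef, hFdef, hadef]
          rw [← hnd]
          field_simp
        rw [h1, h2, ← hnd]
        ring
      have h3 : t * (g h - ε) ≤ ∫ s in (0:ℝ)..t, x (s + h) := by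
        rw [mul_sub]; linarith [hL ▸ hsum]
      have h4 : g h - ε ≤ (∫ s in (0:ℝ)..t, x (s + h)) / t :=
        (le_div_iff₀ ht).mpr (by linarith [mul_comm (g h - ε) t])
      rw [div_eq_inv_mul] at h4
      linarith
    have hgle : ∀ h : ℝ, 0 ≤ h → g h ≤ S t + ε := by
      intro h hh
      have h1 := hpt h hh
      have h2 : t⁻¹ * (∫ s in (0:ℝ)..t, x (s + h)) ≤ S t :=
        le_ciSup (hBdd t ht) (⟨h, hh⟩ : Set.Ici (0:ℝ))
      linarith
    calc γ.ω x = γ.ω g := hωg.symm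
      _ ≤ S t + ε := γ.omega_le hgB hgle
  -- conclude via limsup
  have hbound : IsBoundedUnder (· ≤ ·) atTop S := by
    refine ⟨C, ?_⟩
    rw [eventually_map]
    filter_upwards [eventually_gt_atTop (0:ℝ)] with t ht using hSb t ht
  refine le_of_forall_pos_le_add fun ε hε => ?_
  have hfreq : ∃ᶠ t in atTop, γ.ω x - ε ≤ S t := by
    apply Eventually.frequently
    filter_upwards [eventually_gt_atTop (0:ℝ)] with t ht
    linarith [key ε hε t ht]
  have := le_limsup_of_frequently_le hfreq hbound
  linarith
end
end

section
/- Define z : (0,∞) → [0,∞) by z = sup_{k≥0} e^{k−e^k}·χ_{[0, e^{e^k})}. Then sup_{t>1} (1/log(1+t))∫₀^t z(s)ds < ∞; in particular z generates an element of the Dixmier ideal M_{1,∞}. -/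
open Real Filter MeasureTheory

noncomputable section

/-- The function `z = sup_{k≥0} e^{k-e^k} χ_{[0, e^{e^k})}`. -/
def z : ℝ → ℝ := fun t =>
  ⨆ k : ℕ, Set.indicator (Set.Ico (0:ℝ) (Real.exp (Real.exp k)))
    (fun _ => Real.exp (k - Real.exp k)) t

lemma z_nonneg (s : ℝ) : 0 ≤ z s :=
  Real.iSup_nonneg fun _ => Set.indicator_nonneg (fun _ _ => (Real.exp_pos _).le) s

lemma exp_sub_mono {m j : ℕ} (h : m ≤ j) :
    Real.exp ((j:ℝ) - Real.exp j) ≤ Real.exp ((m:ℝ) - Real.exp m) := by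
  apply Real.exp_le_exp.mpr
  have hmj : (0:ℝ) ≤ (j:ℝ) - m := by
    have := Nat.cast_le (α := ℝ) |>.mpr h; linarith
  have h1 : ((j:ℝ) - m) + 1 ≤ Real.exp ((j:ℝ) - m) := Real.add_one_le_exp _
  have h2 : (1:ℝ) ≤ Real.exp m := Real.one_le_exp (by positivity)
  have h3 : Real.exp (j:ℝ) = Real.exp m * Real.exp ((j:ℝ) - m) := by
    rw [← Real.exp_add]; ring_nf
  nlinarith [Real.exp_pos ((j:ℝ) - m)]

lemma z_eq (m : ℕ) (s : ℝ) (hs0 : 0 ≤ s) (hs : s < Real.exp (Real.exp m))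
    (hmin : ∀ j : ℕ, s < Real.exp (Real.exp j) → m ≤ j) :
    z s = Real.exp ((m:ℝ) - Real.exp m) := by
  have hb : ∀ j : ℕ, Set.indicator (Set.Ico (0:ℝ) (Real.exp (Real.exp j)))
      (fun _ => Real.exp ((j:ℝ) - Real.exp j)) s ≤ Real.exp ((m:ℝ) - Real.exp m) := by
    intro j
    by_cases hj : s ∈ Set.Ico (0:ℝ) (Real.exp (Real.exp j))
    · rw [Set.indicator_of_mem hj]
      exact exp_sub_mono (hmin j hj.2)
    · rw [Set.indicator_of_notMem hj]
      positivity
  have hbdd : BddAbove (Set.range (fun j : ℕ =>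
      Set.indicator (Set.Ico (0:ℝ) (Real.exp (Real.exp j)))
        (fun _ => Real.exp ((j:ℝ) - Real.exp j)) s)) :=
    ⟨Real.exp ((m:ℝ) - Real.exp m), Set.forall_mem_range.mpr hb⟩
  apply le_antisymm
  · exact ciSup_le hb
  · have hm : Set.indicator (Set.Ico (0:ℝ) (Real.exp (Real.exp m)))
        (fun _ => Real.exp ((m:ℝ) - Real.exp m)) s = Real.exp ((m:ℝ) - Real.exp m) :=
      Set.indicator_of_mem (Set.mem_Ico.mpr ⟨hs0, hs⟩) _
    have := le_ciSup hbdd m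
    rw [hm] at this
    exact this

lemma piece (a b c : ℝ) (hab : a ≤ b) (h : ∀ s ∈ Set.Ico a b, z s = c) :
    IntervalIntegrable z volume a b ∧ (∫ s in a..b, z s) = c * (b - a) := by
  have hne : ∀ᵐ x : ℝ, x ≠ b := by
    refine ae_iff.mpr ?_
    simp only [not_not]
    simpa using measure_singleton b
  have hae : ∀ᵐ x : ℝ, x ∈ Set.Ioc a b → z x = c := by
    filter_upwards [hne] with x hxb hx
    exact h x ⟨hx.1.le, lt_of_le_of_ne hx.2 hxb⟩
  have hae' : z =ᵐ[volume.restrict (Set.Ioc a b)] fun _ => c :=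
    (ae_restrict_iff' measurableSet_Ioc).mpr hae
  have hint : IntegrableOn z (Set.Ioc a b) volume :=
    (integrableOn_const (C := c) (by simp)).congr hae'.symm
  constructor
  · exact (intervalIntegrable_iff_integrableOn_Ioc_of_le hab).mpr hint
  · rw [intervalIntegral.integral_of_le hab, setIntegral_congr_ae measurableSet_Ioc hae,
      setIntegral_const]
    simp [Real.volume_Ioc, ENNReal.toReal_ofReal (by linarith : (0:ℝ) ≤ b - a)]
    rw [max_eq_left (by linarith : (0:ℝ) ≤ b - a)]; ring

lemma key (K : ℕ) : IntervalIntegrable z volume 0 (Real.exp (Real.exp K)) ∧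
    (∫ s in (0:ℝ)..(Real.exp (Real.exp K)), z s) ≤
      1 + Real.exp ((K:ℝ)+1) / (Real.exp 1 - 1) := by
  have he1 : (1:ℝ) < Real.exp 1 := by
    have := Real.add_one_le_exp (1:ℝ); linarith
  induction K with
  | zero =>
      have h0 : ∀ s ∈ Set.Ico (0:ℝ) (Real.exp (Real.exp ((0:ℕ):ℝ))),
          z s = Real.exp (((0:ℕ):ℝ) - Real.exp ((0:ℕ):ℝ)) := by
        intro s hs
        exact z_eq 0 s hs.1 hs.2 (fun j _ => Nat.zero_le j)
      obtain ⟨hi, hv⟩ := piece 0 (Real.exp (Real.exp ((0:ℕ):ℝ))) _ (Real.exp_pos _).le h0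
      refine ⟨hi, ?_⟩
      rw [hv]
      have hc : ((0:ℕ):ℝ) = 0 := by norm_num
      rw [hc, zero_sub, Real.exp_zero, Real.exp_neg, sub_zero]
      have h4 : (Real.exp 1)⁻¹ * Real.exp 1 = 1 := inv_mul_cancel₀ (Real.exp_ne_zero 1)
      rw [h4]
      have h5 : 0 < Real.exp ((0:ℝ)+1) / (Real.exp 1 - 1) := div_pos (Real.exp_pos _) (by linarith)
      linarith
  | succ K ih =>
      obtain ⟨hi, hv⟩ := ih
      have hEE : Real.exp (K:ℝ) < Real.exp ((K+1:ℕ):ℝ) := by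
        apply Real.exp_lt_exp.mpr
        exact_mod_cast Nat.lt_succ_self K
      have hAlt : Real.exp (Real.exp (K:ℝ)) < Real.exp (Real.exp ((K+1:ℕ):ℝ)) :=
        Real.exp_lt_exp.mpr hEE
      have hstep : ∀ s ∈ Set.Ico (Real.exp (Real.exp (K:ℝ))) (Real.exp (Real.exp ((K+1:ℕ):ℝ))),
          z s = Real.exp (((K+1:ℕ):ℝ) - Real.exp ((K+1:ℕ):ℝ)) := by
        intro s hs
        refine z_eq (K+1) s (le_trans (Real.exp_pos _).le hs.1) hs.2 ?_
        intro j hj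
        by_contra hc
        push_neg at hc
        have hjK : j ≤ K := Nat.lt_succ_iff.mp hc
        have : Real.exp (Real.exp (j:ℝ)) ≤ Real.exp (Real.exp (K:ℝ)) := by
          apply Real.exp_le_exp.mpr
          apply Real.exp_le_exp.mpr
          exact_mod_cast hjK
        linarith [hs.1]
      obtain ⟨hi2, hv2⟩ := piece _ _ _ hAlt.le hstep
      refine ⟨hi.trans hi2, ?_⟩
      rw [← intervalIntegral.integral_add_adjacent_intervals hi hi2]
      have hb2 : (∫ s in (Real.exp (Real.exp (K:ℝ)))..(Real.exp (Real.exp ((K+1:ℕ):ℝ))), z s)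
          ≤ Real.exp ((K+1:ℕ):ℝ) := by
        rw [hv2]
        have h1 : Real.exp (Real.exp ((K+1:ℕ):ℝ)) - Real.exp (Real.exp (K:ℝ))
            ≤ Real.exp (Real.exp ((K+1:ℕ):ℝ)) := by
          linarith [Real.exp_pos (Real.exp (K:ℝ))]
        calc Real.exp (((K+1:ℕ):ℝ) - Real.exp ((K+1:ℕ):ℝ)) *
              (Real.exp (Real.exp ((K+1:ℕ):ℝ)) - Real.exp (Real.exp (K:ℝ)))
            ≤ Real.exp (((K+1:ℕ):ℝ) - Real.exp ((K+1:ℕ):ℝ)) *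
              Real.exp (Real.exp ((K+1:ℕ):ℝ)) :=
              mul_le_mul_of_nonneg_left h1 (Real.exp_pos _).le
          _ = Real.exp ((K+1:ℕ):ℝ) := by
              rw [← Real.exp_add]
              congr 1
              ring
      have hcast : ((K+1:ℕ):ℝ) = (K:ℝ) + 1 := by push_cast; ring
      rw [hcast] at hb2 ⊢
      have hgeom : Real.exp ((K:ℝ)+1) / (Real.exp 1 - 1) + Real.exp ((K:ℝ)+1)
          = Real.exp ((K:ℝ)+1+1) / (Real.exp 1 - 1) := by
        have hx : Real.exp ((K:ℝ)+1+1) = Real.exp ((K:ℝ)+1) * Real.exp 1 := by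
          rw [← Real.exp_add]
        have hne : Real.exp 1 - 1 ≠ 0 := by linarith
        rw [hx]
        field_simp
        ring
      linarith

theorem z_averages_bounded :
    ∃ C : ℝ, ∀ t > (1:ℝ), (Real.log (1 + t))⁻¹ * ∫ s in (0:ℝ)..t, z s ≤ C := by
  have he1 : (1:ℝ) < Real.exp 1 := by
    have := Real.add_one_le_exp (1:ℝ); linarith
  have hlog2 : 0 < Real.log 2 := Real.log_pos (by norm_num)
  have hlog2le : Real.log 2 ≤ 1 := by
    have h2e : (2:ℝ) ≤ Real.exp 1 := by
      nlinarith [Real.add_one_le_exp (1:ℝ)]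
    calc Real.log 2 ≤ Real.log (Real.exp 1) := Real.log_le_log (by norm_num) h2e
      _ = 1 := Real.log_exp 1
  have hinv : (1:ℝ) ≤ (Real.log 2)⁻¹ := one_le_inv_iff₀.mpr ⟨hlog2, hlog2le⟩
  refine ⟨(1 + Real.exp 2 / (Real.exp 1 - 1)) * (Real.log 2)⁻¹, ?_⟩
  intro t ht
  have ht0 : 0 < t := by linarith
  have hlogt : 0 < Real.log t := Real.log_pos ht
  set K : ℕ := ⌊Real.log (Real.log t)⌋₊ + 1 with hK
  have hKlt : Real.log (Real.log t) < (K:ℝ) := by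
    rw [hK]
    push_cast
    exact Nat.lt_floor_add_one _
  have htlt : t < Real.exp (Real.exp (K:ℝ)) := by
    have h1 : Real.log t < Real.exp (K:ℝ) := by
      calc Real.log t = Real.exp (Real.log (Real.log t)) := (Real.exp_log hlogt).symm
        _ < Real.exp (K:ℝ) := Real.exp_lt_exp.mpr hKlt
    calc t = Real.exp (Real.log t) := (Real.exp_log ht0).symm
      _ < Real.exp (Real.exp (K:ℝ)) := Real.exp_lt_exp.mpr h1
  have hKle : Real.exp ((K:ℝ) - 1) ≤ max 1 (Real.log t) := by
    have hKm : (K:ℝ) - 1 = (⌊Real.log (Real.log t)⌋₊ : ℝ) := by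
      rw [hK]; push_cast; ring
    rw [hKm]
    by_cases hll : 0 ≤ Real.log (Real.log t)
    · have h1 : (⌊Real.log (Real.log t)⌋₊ : ℝ) ≤ Real.log (Real.log t) :=
        Nat.floor_le hll
      calc Real.exp (⌊Real.log (Real.log t)⌋₊ : ℝ) ≤ Real.exp (Real.log (Real.log t)) :=
            Real.exp_le_exp.mpr h1
        _ = Real.log t := Real.exp_log hlogt
        _ ≤ max 1 (Real.log t) := le_max_right _ _
    · push_neg at hll
      have h0 : ⌊Real.log (Real.log t)⌋₊ = 0 := Nat.floor_eq_zero.mpr (by linarith)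
      rw [h0]
      simp
  obtain ⟨hi, hv⟩ := key K
  have hEpos : (0:ℝ) < Real.exp (Real.exp (K:ℝ)) := Real.exp_pos _
  have hsub : Set.uIcc (0:ℝ) t ⊆ Set.uIcc (0:ℝ) (Real.exp (Real.exp (K:ℝ))) := by
    rw [Set.uIcc_of_le ht0.le, Set.uIcc_of_le hEpos.le]
    exact Set.Icc_subset_Icc le_rfl htlt.le
  have hit : IntervalIntegrable z volume 0 t := hi.mono_set hsub
  have hsub2 : Set.uIcc t (Real.exp (Real.exp (K:ℝ))) ⊆
      Set.uIcc (0:ℝ) (Real.exp (Real.exp (K:ℝ))) := by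
    rw [Set.uIcc_of_le htlt.le, Set.uIcc_of_le hEpos.le]
    exact Set.Icc_subset_Icc ht0.le le_rfl
  have hit2 : IntervalIntegrable z volume t (Real.exp (Real.exp (K:ℝ))) := hi.mono_set hsub2
  have hmono : (∫ s in (0:ℝ)..t, z s) ≤ ∫ s in (0:ℝ)..(Real.exp (Real.exp (K:ℝ))), z s := by
    rw [← intervalIntegral.integral_add_adjacent_intervals hit hit2]
    have : 0 ≤ ∫ s in t..(Real.exp (Real.exp (K:ℝ))), z s :=
      intervalIntegral.integral_nonneg htlt.le (fun s _ => z_nonneg s)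
    linarith
  have hexpK : Real.exp ((K:ℝ)+1) ≤ Real.exp 2 * max 1 (Real.log t) := by
    have h2 : Real.exp ((K:ℝ)+1) = Real.exp 2 * Real.exp ((K:ℝ)-1) := by
      rw [← Real.exp_add]; ring_nf
    rw [h2]
    exact mul_le_mul_of_nonneg_left hKle (Real.exp_pos _).le
  have hL : Real.log 2 ≤ Real.log (1 + t) := by
    apply Real.log_le_log (by norm_num)
    linarith
  have hLpos : 0 < Real.log (1 + t) := lt_of_lt_of_le hlog2 hL
  have hone : (1:ℝ) ≤ (Real.log 2)⁻¹ * Real.log (1 + t) := by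
    calc (1:ℝ) = (Real.log 2)⁻¹ * Real.log 2 := by field_simp
      _ ≤ (Real.log 2)⁻¹ * Real.log (1 + t) := by
          apply mul_le_mul_of_nonneg_left hL (by positivity)
  have hmax : max 1 (Real.log t) ≤ (Real.log 2)⁻¹ * Real.log (1 + t) := by
    rcases max_cases 1 (Real.log t) with ⟨h1, _⟩ | ⟨h1, _⟩ <;> rw [h1]
    · exact hone
    · have hlt : Real.log t ≤ Real.log (1 + t) := Real.log_le_log ht0 (by linarith)
      nlinarith
  -- assemble
  have hEnn : (0:ℝ) < Real.exp 1 - 1 := by linarith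
  have hdiv : Real.exp ((K:ℝ)+1) / (Real.exp 1 - 1) ≤
      Real.exp 2 / (Real.exp 1 - 1) * max 1 (Real.log t) := by
    rw [div_mul_eq_mul_div]
    exact (div_le_div_iff_of_pos_right hEnn).mpr hexpK
  have hEq : (0:ℝ) ≤ Real.exp 2 / (Real.exp 1 - 1) := (div_pos (Real.exp_pos _) hEnn).le
  have hI : (∫ s in (0:ℝ)..t, z s) ≤
      (1 + Real.exp 2 / (Real.exp 1 - 1)) * ((Real.log 2)⁻¹ * Real.log (1 + t)) := by
    have h5 : Real.exp 2 / (Real.exp 1 - 1) * max 1 (Real.log t) ≤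
        Real.exp 2 / (Real.exp 1 - 1) * ((Real.log 2)⁻¹ * Real.log (1 + t)) :=
      mul_le_mul_of_nonneg_left hmax hEq
    nlinarith
  rw [inv_mul_le_iff₀ hLpos]
  calc (∫ s in (0:ℝ)..t, z s) ≤
      (1 + Real.exp 2 / (Real.exp 1 - 1)) * ((Real.log 2)⁻¹ * Real.log (1 + t)) := hI
    _ = Real.log (1 + t) * ((1 + Real.exp 2 / (Real.exp 1 - 1)) * (Real.log 2)⁻¹) := by ring
end
end

section
/- Define z : (0,∞) → [0,∞) by z = sup_{k≥0} e^{k−e^k}·χ_{[0, e^{e^k})}. Then lim_{n→∞} (1/log(1+e^{e^n}))∫₀^{e^{e^n}} z(s)ds = e/(e−1), while lim_{n→∞} (1/log(1+t_n))∫₀^{t_n} z(s)ds = 1/(e−1) + 1/2 where t_n = (e^{e^{n+1}}+e^{e^n})/2. In particular lim_{t→∞}(1/log(1+t))∫₀^t z(s)ds does not exist. -/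
open Real Filter MeasureTheory

noncomputable section

namespace ZAux

def E (n : ℕ) : ℝ := Real.exp (Real.exp n)
def c (k : ℕ) : ℝ := Real.exp (k - Real.exp k)

lemma E_pos (n : ℕ) : 0 < E n := Real.exp_pos _
lemma c_pos (k : ℕ) : 0 < c k := Real.exp_pos _

lemma one_lt_e : (1:ℝ) < Real.exp 1 := by linarith [Real.exp_one_gt_d9]
lemma two_lt_e : (2:ℝ) < Real.exp 1 := by linarith [Real.exp_one_gt_d9]

lemma one_le_E (n : ℕ) : 1 ≤ E n := Real.one_le_exp (Real.exp_pos _).le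

lemma E_mono {m n : ℕ} (h : m ≤ n) : E m ≤ E n :=
  Real.exp_le_exp.2 (Real.exp_le_exp.2 (by exact_mod_cast h))

lemma c_anti {a b : ℕ} (h : a ≤ b) : c b ≤ c a := by
  apply Real.exp_le_exp.2
  have ha : (a:ℝ) ≤ b := by exact_mod_cast h
  have h1 : (1:ℝ) ≤ Real.exp a := Real.one_le_exp (Nat.cast_nonneg a)
  have h2 : ((b:ℝ) - a) + 1 ≤ Real.exp ((b:ℝ) - a) := Real.add_one_le_exp _
  have h3 : Real.exp (b:ℝ) = Real.exp (a:ℝ) * Real.exp ((b:ℝ) - a) := by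
    rw [← Real.exp_add]; ring_nf
  nlinarith [Real.exp_pos ((b:ℝ) - a)]

lemma bdd (t : ℝ) : BddAbove (Set.range fun k : ℕ =>
    Set.indicator (Set.Ico (0:ℝ) (E k)) (fun _ => c k) t) := by
  refine ⟨c 0, ?_⟩
  rintro x ⟨j, rfl⟩
  dsimp only
  by_cases hj : t ∈ Set.Ico (0:ℝ) (E j)
  · rw [Set.indicator_of_mem hj]; exact c_anti (Nat.zero_le j)
  · rw [Set.indicator_of_notMem hj]; exact (c_pos 0).le

lemma z_def (t : ℝ) : z t = ⨆ k : ℕ, Set.indicator (Set.Ico (0:ℝ) (E k)) (fun _ => c k) t := rfl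

lemma z_eq_c (k : ℕ) (t : ℝ) (ht0 : 0 ≤ t) (hlt : t < E k)
    (hk : ∀ j : ℕ, t < E j → k ≤ j) : z t = c k := by
  rw [z_def]
  apply le_antisymm
  · apply ciSup_le
    intro j
    by_cases hj : t ∈ Set.Ico (0:ℝ) (E j)
    · rw [Set.indicator_of_mem hj]; exact c_anti (hk j hj.2)
    · rw [Set.indicator_of_notMem hj]; exact (c_pos k).le
  · have := le_ciSup (bdd t) k
    rwa [Set.indicator_of_mem (Set.mem_Ico.mpr ⟨ht0, hlt⟩)] at this

lemma z_low {t : ℝ} (h0 : 0 ≤ t) (h : t < E 0) : z t = c 0 :=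
  z_eq_c 0 t h0 h fun j _ => Nat.zero_le j

lemma z_mid {k : ℕ} {t : ℝ} (h1 : E k ≤ t) (h2 : t < E (k+1)) : z t = c (k+1) := by
  refine z_eq_c (k+1) t (le_trans (E_pos k).le h1) h2 fun j hj => ?_
  by_contra hc
  push_neg at hc
  exact absurd (lt_of_le_of_lt (le_trans (E_mono (by omega : j ≤ k)) h1) hj) (lt_irrefl _)

lemma z_meas : Measurable z :=
  Measurable.iSup fun k => (measurable_const.indicator measurableSet_Ico)

lemma z_nonneg (t : ℝ) : 0 ≤ z t := by
  rw [z_def]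
  refine le_trans ?_ (le_ciSup (bdd t) 0)
  exact Set.indicator_nonneg (fun _ _ => (c_pos 0).le) t

lemma z_le (t : ℝ) : z t ≤ c 0 := by
  rw [z_def]
  apply ciSup_le
  intro j
  by_cases hj : t ∈ Set.Ico (0:ℝ) (E j)
  · rw [Set.indicator_of_mem hj]; exact c_anti (Nat.zero_le j)
  · rw [Set.indicator_of_notMem hj]; exact (c_pos 0).le

lemma z_intble (a b : ℝ) : IntervalIntegrable z volume a b := by
  constructor <;>
  · refine Integrable.mono' (g := fun _ => c 0)
      (integrableOn_const measure_Ioc_lt_top.ne)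
      z_meas.aestronglyMeasurable.restrict (ae_of_all _ fun x => ?_)
    rw [Real.norm_eq_abs, abs_of_nonneg (z_nonneg x)]
    exact z_le x

lemma integral_const_on (a b : ℝ) (hab : a ≤ b) (k : ℕ)
    (h : ∀ x ∈ Set.Ioo a b, z x = c k) : ∫ s in a..b, z s = c k * (b - a) := by
  rw [intervalIntegral.integral_of_le hab, MeasureTheory.integral_Ioc_eq_integral_Ioo,
    MeasureTheory.setIntegral_congr_fun measurableSet_Ioo h,
    MeasureTheory.setIntegral_const, MeasureTheory.measureReal_def, Real.volume_Ioo, ENNReal.toReal_ofReal (by linarith)]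
  rw [smul_eq_mul]; ring

def r (k : ℕ) : ℝ := Real.exp (((k:ℝ)+1) + Real.exp k - Real.exp ((k:ℝ)+1))

lemma E_succ_cast (n : ℕ) : E (n+1) = Real.exp (Real.exp ((n:ℝ)+1)) := by
  simp [E]

lemma c_succ_mul (n : ℕ) : c (n+1) * (E (n+1) - E n) = Real.exp ((n:ℝ)+1) - r n := by
  rw [c, E_succ_cast, E, r]
  push_cast
  rw [mul_sub, ← Real.exp_add, ← Real.exp_add]
  ring_nf

lemma A_zero : ∫ s in (0:ℝ)..E 0, z s = 1 := by
  rw [integral_const_on 0 (E 0) (E_pos 0).le 0 (fun x hx => z_low hx.1.le hx.2)]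
  rw [c, E]
  have h0 : ((0:ℕ):ℝ) = 0 := by norm_num
  rw [h0, sub_zero, ← Real.exp_add]
  norm_num

lemma A_succ (n : ℕ) : ∫ s in (0:ℝ)..E (n+1), z s
    = (∫ s in (0:ℝ)..E n, z s) + (Real.exp ((n:ℝ)+1) - r n) := by
  rw [← intervalIntegral.integral_add_adjacent_intervals (z_intble 0 (E n)) (z_intble (E n) (E (n+1))),
    integral_const_on (E n) (E (n+1)) (E_mono (Nat.le_succ n)) (n+1)
      (fun x hx => z_mid hx.1.le hx.2), c_succ_mul]

lemma A_eq (n : ℕ) : ∫ s in (0:ℝ)..E n, z s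
    = 1 + ∑ k ∈ Finset.range n, (Real.exp ((k:ℝ)+1) - r k) := by
  induction n with
  | zero => simpa using A_zero
  | succ n ih => rw [A_succ, ih, Finset.sum_range_succ]; ring

lemma sum_exp (n : ℕ) : ∑ k ∈ Finset.range n, Real.exp ((k:ℝ)+1)
    = (Real.exp ((n:ℝ)+1) - Real.exp 1) / (Real.exp 1 - 1) := by
  have he : Real.exp 1 - 1 ≠ 0 := by linarith [one_lt_e]
  induction n with
  | zero => simp
  | succ n ih =>
    rw [Finset.sum_range_succ, ih]
    have h1 : Real.exp ((↑(n+1):ℝ)+1) = Real.exp ((n:ℝ)+1) * Real.exp 1 := by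
      rw [← Real.exp_add]; push_cast; ring_nf
    rw [h1]
    push_cast
    field_simp
    ring

def q : ℝ := Real.exp (2 - Real.exp 1)

lemma q_lt_one : q < 1 := by
  have h := Real.exp_lt_exp.2 (show (2:ℝ) - Real.exp 1 < 0 by linarith [two_lt_e])
  rwa [Real.exp_zero] at h

lemma q_pos : 0 < q := Real.exp_pos _

lemma r_le (k : ℕ) : r k ≤ q ^ (k+1) := by
  rw [r, q, ← Real.exp_nat_mul]
  apply Real.exp_le_exp.2
  have h1 : (k:ℝ) + 1 ≤ Real.exp k := Real.add_one_le_exp _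
  have h2 : Real.exp ((k:ℝ)+1) = Real.exp k * Real.exp 1 := by rw [← Real.exp_add]
  have h3 : (2:ℝ) < Real.exp 1 := two_lt_e
  push_cast
  nlinarith [Real.exp_pos (k:ℝ)]

lemma r_nonneg (k : ℕ) : 0 ≤ r k := (Real.exp_pos _).le

lemma r_le_one (k : ℕ) : r k ≤ 1 :=
  (r_le k).trans (pow_le_one₀ q_pos.le q_lt_one.le)

lemma R_bound (n : ℕ) : ∑ k ∈ Finset.range n, r k ≤ (1 - q)⁻¹ := by
  have h1 : ∑ k ∈ Finset.range n, r k ≤ ∑ k ∈ Finset.range n, q ^ k := by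
    apply Finset.sum_le_sum
    intro k _
    exact (r_le k).trans (pow_le_pow_of_le_one q_pos.le q_lt_one.le (by omega))
  refine h1.trans ?_
  rw [geom_sum_eq (ne_of_lt q_lt_one) n]
  have hq : 0 < 1 - q := by linarith [q_lt_one]
  have hpn : 0 ≤ q ^ n := pow_nonneg q_pos.le n
  have h2 : (q ^ n - 1) / (q - 1) = (1 - q ^ n) / (1 - q) := by
    rw [div_eq_div_iff (by linarith) (by linarith)]; ring
  rw [h2, ← one_div]
  gcongr
  linarith

lemma R_nonneg (n : ℕ) : 0 ≤ ∑ k ∈ Finset.range n, r k :=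
  Finset.sum_nonneg fun k _ => r_nonneg k

def K : ℝ := 1 + Real.exp 1 / (Real.exp 1 - 1) + (1 - q)⁻¹

lemma K_pos : 0 < K := by
  have h1 : 0 < Real.exp 1 - 1 := by linarith [one_lt_e]
  have h2 : 0 < 1 - q := by linarith [q_lt_one]
  have := div_nonneg (Real.exp_pos 1).le h1.le
  have := inv_nonneg.2 h2.le
  rw [K]; linarith

lemma D_bound (n : ℕ) :
    |(∫ s in (0:ℝ)..E n, z s) - Real.exp ((n:ℝ)+1) / (Real.exp 1 - 1)| ≤ K := by
  have he : (0:ℝ) < Real.exp 1 - 1 := by linarith [one_lt_e]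
  rw [A_eq, Finset.sum_sub_distrib, sum_exp]
  have hR1 := R_bound n
  have hR0 := R_nonneg n
  have hq : 0 < (1 - q)⁻¹ := inv_pos.2 (by linarith [q_lt_one])
  have key : 1 + ((Real.exp ((n:ℝ)+1) - Real.exp 1) / (Real.exp 1 - 1)
      - ∑ k ∈ Finset.range n, r k) - Real.exp ((n:ℝ)+1) / (Real.exp 1 - 1)
      = 1 - Real.exp 1 / (Real.exp 1 - 1) - ∑ k ∈ Finset.range n, r k := by
    field_simp
    ring
  rw [key, abs_le, K]
  constructor <;> nlinarith [div_nonneg (Real.exp_pos 1).le he.le]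

/-- generic squeeze helper -/
lemma tendsto_of_abs_le (f : ℕ → ℝ) (L C : ℝ)
    (h : ∀ n, |f n - L| ≤ C * Real.exp (-(n:ℝ))) : Tendsto f atTop (nhds L) := by
  rw [← tendsto_sub_nhds_zero_iff]
  apply squeeze_zero_norm h
  have h1 : Tendsto (fun n : ℕ => Real.exp (-(n:ℝ))) atTop (nhds 0) :=
    Real.tendsto_exp_neg_atTop_nhds_zero.comp tendsto_natCast_atTop_atTop
  simpa using h1.const_mul C

lemma D_div_tendsto : Tendsto (fun n : ℕ => (∫ s in (0:ℝ)..E n, z s) / Real.exp n)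
    atTop (nhds (Real.exp 1 / (Real.exp 1 - 1))) := by
  apply tendsto_of_abs_le _ _ K
  intro n
  have he : (0:ℝ) < Real.exp 1 - 1 := by linarith [one_lt_e]
  have hpos := Real.exp_pos (n:ℝ)
  have key : (∫ s in (0:ℝ)..E n, z s) / Real.exp n - Real.exp 1 / (Real.exp 1 - 1)
      = ((∫ s in (0:ℝ)..E n, z s) - Real.exp ((n:ℝ)+1) / (Real.exp 1 - 1)) * Real.exp (-(n:ℝ)) := by
    have hne := (Real.exp_pos (n:ℝ)).ne'
    have h3 : Real.exp ((n:ℝ)+1) = Real.exp (n:ℝ) * Real.exp 1 := by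
      rw [← Real.exp_add]
    rw [Real.exp_neg, h3, sub_mul, ← div_eq_mul_inv,
      show Real.exp (n:ℝ) * Real.exp 1 / (Real.exp 1 - 1)
        = Real.exp 1 / (Real.exp 1 - 1) * Real.exp (n:ℝ) by ring,
      mul_inv_cancel_right₀ hne]
  rw [key, abs_mul, abs_of_pos (Real.exp_pos _)]
  exact mul_le_mul_of_nonneg_right (D_bound n) (Real.exp_pos _).le

lemma log_lb (n : ℕ) : Real.exp n ≤ Real.log (1 + E n) := by
  have h1 : E n ≤ 1 + E n := by linarith
  calc Real.exp (n:ℝ) = Real.log (E n) := by rw [E, Real.log_exp]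
  _ ≤ Real.log (1 + E n) := Real.log_le_log (E_pos n) h1

lemma log_ub (n : ℕ) : Real.log (1 + E n) ≤ Real.exp n + Real.log 2 := by
  have h1 : 1 + E n ≤ 2 * E n := by linarith [one_le_E n]
  calc Real.log (1 + E n) ≤ Real.log (2 * E n) :=
        Real.log_le_log (by linarith [E_pos n]) h1
  _ = Real.log 2 + Real.log (E n) := Real.log_mul two_ne_zero (E_pos n).ne'
  _ = Real.exp n + Real.log 2 := by rw [E, Real.log_exp]; ring

lemma log_pos' (n : ℕ) : 0 < Real.log (1 + E n) :=
  lt_of_lt_of_le (Real.exp_pos _) (log_lb n)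

lemma log_div_tendsto : Tendsto (fun n : ℕ => Real.log (1 + E n) / Real.exp n)
    atTop (nhds 1) := by
  apply tendsto_of_abs_le _ _ (Real.log 2)
  intro n
  have hpos := Real.exp_pos (n:ℝ)
  have h1 := log_lb n
  have h2 := log_ub n
  have key : Real.log (1 + E n) / Real.exp n - 1
      = (Real.log (1 + E n) - Real.exp n) * Real.exp (-(n:ℝ)) := by
    rw [Real.exp_neg]; field_simp
  rw [key, abs_mul, abs_of_pos (Real.exp_pos _), abs_of_nonneg (by linarith)]
  exact mul_le_mul_of_nonneg_right (by linarith) (Real.exp_pos _).le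

lemma tendsto_first : Tendsto (fun n : ℕ =>
    (Real.log (1 + E n))⁻¹ * ∫ s in (0:ℝ)..E n, z s)
    atTop (nhds (Real.exp 1 / (Real.exp 1 - 1))) := by
  have h := D_div_tendsto.div log_div_tendsto one_ne_zero
  rw [div_one] at h
  refine h.congr fun n => ?_
  have h1 := (log_pos' n).ne'
  have h2 := (Real.exp_pos (n:ℝ)).ne'
  rw [Pi.div_apply]
  field_simp

/-! second sequence -/

def T (n : ℕ) : ℝ := (E (n+1) + E n) / 2

lemma E_le_T (n : ℕ) : E n ≤ T n := by
  have := E_mono (Nat.le_succ n); rw [T]; linarith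

lemma T_lt_E (n : ℕ) : T n < E (n+1) := by
  have : E n < E (n+1) :=
    Real.exp_lt_exp.2 (Real.exp_lt_exp.2 (by exact_mod_cast Nat.lt_succ_self n))
  rw [T]; linarith

lemma B_eq (n : ℕ) : ∫ s in (0:ℝ)..T n, z s
    = (∫ s in (0:ℝ)..E n, z s) + (Real.exp ((n:ℝ)+1) - r n) / 2 := by
  rw [← intervalIntegral.integral_add_adjacent_intervals (z_intble 0 (E n)) (z_intble (E n) (T n)),
    integral_const_on (E n) (T n) (E_le_T n) (n+1)
      (fun x hx => z_mid hx.1.le (hx.2.trans (T_lt_E n)))]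
  have h1 : T n - E n = (E (n+1) - E n) / 2 := by rw [T]; ring
  rw [h1]
  have := c_succ_mul n
  have hc := c_pos (n+1)
  nlinarith [c_succ_mul n]

lemma B_div_tendsto : Tendsto (fun n : ℕ => (∫ s in (0:ℝ)..T n, z s) / Real.exp ((n:ℝ)+1))
    atTop (nhds ((Real.exp 1 - 1)⁻¹ + 1/2)) := by
  apply tendsto_of_abs_le _ _ (K + 1/2)
  intro n
  have he : (0:ℝ) < Real.exp 1 - 1 := by linarith [one_lt_e]
  have hpos := Real.exp_pos ((n:ℝ)+1)
  have hD := D_bound n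
  have hr0 := r_nonneg n
  have hr1 := r_le_one n
  rw [B_eq]
  have key : ((∫ s in (0:ℝ)..E n, z s) + (Real.exp ((n:ℝ)+1) - r n) / 2) / Real.exp ((n:ℝ)+1)
      - ((Real.exp 1 - 1)⁻¹ + 1/2)
      = (((∫ s in (0:ℝ)..E n, z s) - Real.exp ((n:ℝ)+1) / (Real.exp 1 - 1)) - r n / 2)
        * (Real.exp ((n:ℝ)+1))⁻¹ := by
    field_simp
    ring
  rw [key, abs_mul, abs_of_pos (inv_pos.2 hpos)]
  have h1 : |((∫ s in (0:ℝ)..E n, z s) - Real.exp ((n:ℝ)+1) / (Real.exp 1 - 1)) - r n / 2|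
      ≤ K + 1/2 := by
    rw [abs_le] at hD ⊢
    constructor <;> [linarith [hD.1]; linarith [hD.2]]
  have h2 : (Real.exp ((n:ℝ)+1))⁻¹ ≤ Real.exp (-(n:ℝ)) := by
    rw [← Real.exp_neg]
    exact Real.exp_le_exp.2 (by linarith)
  have hK := K_pos
  calc |((∫ s in (0:ℝ)..E n, z s) - Real.exp ((n:ℝ)+1) / (Real.exp 1 - 1)) - r n / 2|
        * (Real.exp ((n:ℝ)+1))⁻¹
      ≤ (K + 1/2) * (Real.exp ((n:ℝ)+1))⁻¹ :=
        mul_le_mul_of_nonneg_right h1 (inv_pos.2 hpos).le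
    _ ≤ (K + 1/2) * Real.exp (-(n:ℝ)) := mul_le_mul_of_nonneg_left h2 (by linarith)

lemma logT_lb (n : ℕ) : Real.exp ((n:ℝ)+1) - Real.log 2 ≤ Real.log (1 + T n) := by
  have h1 : E (n+1) / 2 ≤ 1 + T n := by
    have := E_pos n; rw [T]; linarith
  have h2 : (0:ℝ) < E (n+1) / 2 := by linarith [E_pos (n+1)]
  calc Real.exp ((n:ℝ)+1) - Real.log 2 = Real.log (E (n+1) / 2) := by
        rw [Real.log_div (E_pos (n+1)).ne' two_ne_zero, E_succ_cast, Real.log_exp]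
    _ ≤ Real.log (1 + T n) := Real.log_le_log h2 h1

lemma logT_ub (n : ℕ) : Real.log (1 + T n) ≤ Real.exp ((n:ℝ)+1) + Real.log 2 := by
  have hE := E_mono (Nat.le_succ n)
  have h1 : 1 + T n ≤ 2 * E (n+1) := by
    have := one_le_E (n+1); rw [T]; linarith
  have h2 : (0:ℝ) < 1 + T n := by
    have := E_pos n; have := E_pos (n+1); rw [T]; linarith
  calc Real.log (1 + T n) ≤ Real.log (2 * E (n+1)) := Real.log_le_log h2 h1
    _ = Real.log 2 + Real.log (E (n+1)) := Real.log_mul two_ne_zero (E_pos (n+1)).ne'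
    _ = Real.exp ((n:ℝ)+1) + Real.log 2 := by rw [E_succ_cast, Real.log_exp]; ring

lemma logT_pos (n : ℕ) : 0 < Real.log (1 + T n) := by
  have h := logT_lb n
  have h2 : Real.log 2 < 1 := by
    rw [← Real.log_exp 1]
    exact Real.log_lt_log two_pos two_lt_e
  have h3 : (1:ℝ) ≤ Real.exp ((n:ℝ)+1) := Real.one_le_exp (by positivity)
  linarith

lemma logT_div_tendsto : Tendsto (fun n : ℕ => Real.log (1 + T n) / Real.exp ((n:ℝ)+1))
    atTop (nhds 1) := by
  apply tendsto_of_abs_le _ _ (Real.log 2)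
  intro n
  have hpos := Real.exp_pos ((n:ℝ)+1)
  have h1 := logT_lb n
  have h2 := logT_ub n
  have key : Real.log (1 + T n) / Real.exp ((n:ℝ)+1) - 1
      = (Real.log (1 + T n) - Real.exp ((n:ℝ)+1)) * (Real.exp ((n:ℝ)+1))⁻¹ := by
    field_simp
  have hlog2 : 0 ≤ Real.log 2 := Real.log_nonneg one_le_two
  have hinv : (Real.exp ((n:ℝ)+1))⁻¹ ≤ Real.exp (-(n:ℝ)) := by
    rw [← Real.exp_neg]
    exact Real.exp_le_exp.2 (by linarith)
  rw [key, abs_mul, abs_of_pos (inv_pos.2 hpos)]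
  calc |Real.log (1 + T n) - Real.exp ((n:ℝ)+1)| * (Real.exp ((n:ℝ)+1))⁻¹
      ≤ Real.log 2 * (Real.exp ((n:ℝ)+1))⁻¹ := by
        apply mul_le_mul_of_nonneg_right _ (inv_pos.2 hpos).le
        rw [abs_le]; constructor <;> linarith
    _ ≤ Real.log 2 * Real.exp (-(n:ℝ)) := mul_le_mul_of_nonneg_left hinv hlog2

lemma tendsto_second : Tendsto (fun n : ℕ =>
    (Real.log (1 + T n))⁻¹ * ∫ s in (0:ℝ)..T n, z s)
    atTop (nhds ((Real.exp 1 - 1)⁻¹ + 1/2)) := by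
  have h := B_div_tendsto.div logT_div_tendsto one_ne_zero
  rw [div_one] at h
  refine h.congr fun n => ?_
  have h1 := (logT_pos n).ne'
  have h2 := (Real.exp_pos ((n:ℝ)+1)).ne'
  rw [Pi.div_apply]
  field_simp

lemma E_tendsto : Tendsto (fun n : ℕ => E n) atTop atTop :=
  Real.tendsto_exp_atTop.comp (Real.tendsto_exp_atTop.comp tendsto_natCast_atTop_atTop)

lemma T_tendsto : Tendsto (fun n : ℕ => T n) atTop atTop :=
  tendsto_atTop_mono E_le_T E_tendsto

lemma limits_ne : Real.exp 1 / (Real.exp 1 - 1) ≠ (Real.exp 1 - 1)⁻¹ + 1/2 := by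
  have he : (0:ℝ) < Real.exp 1 - 1 := by linarith [one_lt_e]
  intro h
  rw [div_eq_iff he.ne', add_mul, inv_mul_cancel₀ he.ne'] at h
  have : Real.exp 1 = 1 := by linarith
  linarith [one_lt_e]

end ZAux

theorem z_averages_divergent :
    Tendsto (fun n : ℕ =>
        (Real.log (1 + Real.exp (Real.exp n)))⁻¹ * ∫ s in (0:ℝ)..(Real.exp (Real.exp n)), z s)
      atTop (nhds (Real.exp 1 / (Real.exp 1 - 1))) ∧
    Tendsto (fun n : ℕ =>
        (Real.log (1 + (Real.exp (Real.exp (n + 1)) + Real.exp (Real.exp n)) / 2))⁻¹ *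
          ∫ s in (0:ℝ)..((Real.exp (Real.exp (n + 1)) + Real.exp (Real.exp n)) / 2), z s)
      atTop (nhds ((Real.exp 1 - 1)⁻¹ + 1 / 2)) ∧
    ¬ ∃ L : ℝ, Tendsto (fun t : ℝ => (Real.log (1 + t))⁻¹ * ∫ s in (0:ℝ)..t, z s)
        atTop (nhds L) := by
  have hTdef : ∀ n : ℕ, ZAux.T n
      = (Real.exp (Real.exp ((n:ℝ) + 1)) + Real.exp (Real.exp n)) / 2 := by
    intro n
    rw [ZAux.T, ZAux.E_succ_cast, ZAux.E]
  have h1 : Tendsto (fun n : ℕ =>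
      (Real.log (1 + Real.exp (Real.exp n)))⁻¹ * ∫ s in (0:ℝ)..(Real.exp (Real.exp n)), z s)
      atTop (nhds (Real.exp 1 / (Real.exp 1 - 1))) := ZAux.tendsto_first
  have h2 : Tendsto (fun n : ℕ =>
      (Real.log (1 + (Real.exp (Real.exp ((n:ℝ) + 1)) + Real.exp (Real.exp n)) / 2))⁻¹ *
        ∫ s in (0:ℝ)..((Real.exp (Real.exp ((n:ℝ) + 1)) + Real.exp (Real.exp n)) / 2), z s)
      atTop (nhds ((Real.exp 1 - 1)⁻¹ + 1 / 2)) := by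
    refine ZAux.tendsto_second.congr fun n => ?_
    rw [hTdef n]
  refine ⟨h1, h2, ?_⟩
  rintro ⟨L, hL⟩
  have hE1 : Tendsto (fun n : ℕ =>
      (Real.log (1 + Real.exp (Real.exp n)))⁻¹ * ∫ s in (0:ℝ)..(Real.exp (Real.exp n)), z s)
      atTop (nhds L) := hL.comp ZAux.E_tendsto
  have hE2 : Tendsto (fun n : ℕ =>
      (Real.log (1 + ZAux.T n))⁻¹ * ∫ s in (0:ℝ)..(ZAux.T n), z s)
      atTop (nhds L) := hL.comp ZAux.T_tendsto
  have e1 : L = Real.exp 1 / (Real.exp 1 - 1) := tendsto_nhds_unique hE1 h1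
  have e2 : L = (Real.exp 1 - 1)⁻¹ + 1 / 2 := tendsto_nhds_unique hE2 ZAux.tendsto_second
  exact ZAux.limits_ne (e1 ▸ e2)
end
end
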